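/- Let p_v, p_ω, p_r : I → ℝ be differentiable functions on an interval I with (p_v(τ), p_ω(τ)) ≠ (0,0), satisfying ṗ_v = -p_r + 2p_ω ω/r and ṗ_ω = -2p_v rω + 2p_ω v/r evaluated at a point τ₀ where ω(τ₀) = 0, v(τ₀) = 0, r(τ₀) = 1. Define ψ by sin ψ = -p_v/√(p_v² + p_ω²), cos ψ = p_ω/√(p_v² + p_ω²). Then the derivative of ψ at τ₀ satisfies ψ̇(τ₀) = p_r(τ₀)·p_ω(τ₀)/(p_v(τ₀)² + p_ω(τ₀)²). -/

import Mathlib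

theorem stmt_9 (τ0 : ℝ) (pv pw pr ω v r ψ : ℝ → ℝ)
    (hne : ∀ τ, (pv τ, pw τ) ≠ (0, 0))
    (hω : ω τ0 = 0) (hv : v τ0 = 0) (hr : r τ0 = 1)
    (hpv : HasDerivAt pv (-pr τ0 + 2 * pw τ0 * ω τ0 / r τ0) τ0)
    (hpw : HasDerivAt pw (-2 * pv τ0 * r τ0 * ω τ0 + 2 * pw τ0 * v τ0 / r τ0) τ0)
    (hψdiff : DifferentiableAt ℝ ψ τ0)
    (hsin : ∀ τ, Real.sin (ψ τ) = -pv τ / Real.sqrt (pv τ ^ 2 + pw τ ^ 2))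
    (hcos : ∀ τ, Real.cos (ψ τ) = pw τ / Real.sqrt (pv τ ^ 2 + pw τ ^ 2)) :
    deriv ψ τ0 = pr τ0 * pw τ0 / (pv τ0 ^ 2 + pw τ0 ^ 2) := by
  rw [hω, hr] at hpv
  rw [hω, hv, hr] at hpw
  simp only [mul_zero, zero_mul, zero_div, mul_one, div_one, add_zero, mul_zero] at hpv hpw
  -- now hpv : HasDerivAt pv (-pr τ0) τ0, hpw : HasDerivAt pw 0 τ0 (hopefully)
  have hD : 0 < pv τ0 ^ 2 + pw τ0 ^ 2 := by
    rcases eq_or_ne (pv τ0) 0 with h1 | h1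
    · rcases eq_or_ne (pw τ0) 0 with h2 | h2
      · exact absurd (by rw [h1, h2]) (hne τ0)
      · positivity
    · positivity
  set D := pv τ0 ^ 2 + pw τ0 ^ 2 with hDdef
  have hN : 0 < Real.sqrt D := Real.sqrt_pos.mpr hD
  have hN2 : Real.sqrt D ^ 2 = D := Real.sq_sqrt hD.le
  have hf : HasDerivAt (fun τ => pv τ ^ 2 + pw τ ^ 2)
      (2 * pv τ0 ^ 1 * (-pr τ0) + 2 * pw τ0 ^ 1 * 0) τ0 := by
    have h1 := hpv.pow 2
    have h2 := hpw.pow 2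
    have h3 := h1.add h2
    simp at h3 ⊢
    exact h3
  have hg : HasDerivAt (fun τ => Real.sqrt (pv τ ^ 2 + pw τ ^ 2))
      ((2 * pv τ0 ^ 1 * (-pr τ0) + 2 * pw τ0 ^ 1 * 0) / (2 * Real.sqrt D)) τ0 :=
    hf.sqrt hD.ne'
  have hgne : Real.sqrt (pv τ0 ^ 2 + pw τ0 ^ 2) ≠ 0 := by rw [← hDdef]; exact hN.ne'
  have hS := (hpv.neg).div hg hgne
  have hC := hpw.div hg hgne
  have hψ := hψdiff.hasDerivAt
  have hsinD : HasDerivAt (fun τ => Real.sin (ψ τ)) (Real.cos (ψ τ0) * deriv ψ τ0) τ0 :=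
    (Real.hasDerivAt_sin (ψ τ0)).comp τ0 hψ
  have hcosD : HasDerivAt (fun τ => Real.cos (ψ τ)) (-Real.sin (ψ τ0) * deriv ψ τ0) τ0 :=
    (Real.hasDerivAt_cos (ψ τ0)).comp τ0 hψ
  have hsinD' : HasDerivAt (fun τ => -pv τ / Real.sqrt (pv τ ^ 2 + pw τ ^ 2))
      (Real.cos (ψ τ0) * deriv ψ τ0) τ0 := by
    have : (fun τ => Real.sin (ψ τ)) = fun τ => -pv τ / Real.sqrt (pv τ ^ 2 + pw τ ^ 2) :=
      funext hsin
    rwa [this] at hsinD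
  have hcosD' : HasDerivAt (fun τ => pw τ / Real.sqrt (pv τ ^ 2 + pw τ ^ 2))
      (-Real.sin (ψ τ0) * deriv ψ τ0) τ0 := by
    have : (fun τ => Real.cos (ψ τ)) = fun τ => pw τ / Real.sqrt (pv τ ^ 2 + pw τ ^ 2) :=
      funext hcos
    rwa [this] at hcosD
  have E1 := hsinD'.unique hS
  have E2 := hcosD'.unique hC
  simp only [hsin τ0, hcos τ0, ← hDdef] at E1 E2
  set N := Real.sqrt D with hNdef
  -- E1 : (pw τ0 / N) * deriv ψ τ0 = ...
  -- E2 : -(-pv τ0 / N) * deriv ψ τ0 = ...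
  have hN2' : N ^ 2 = pv τ0 ^ 2 + pw τ0 ^ 2 := by rw [hN2, hDdef]
  have key : deriv ψ τ0 = (pw τ0 / N) * ((pw τ0 / N) * deriv ψ τ0)
      - (-pv τ0 / N) * ((-(-pv τ0 / N)) * deriv ψ τ0) := by
    field_simp
    linear_combination (deriv ψ τ0) * hN2'
  rw [key, E1, E2, hDdef]
  simp only [Pi.neg_apply]
  rw [← hN2']
  field_simp
  ring_nf
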